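/- The function x(τ) = ((1+e^τ−C̄·exp(e^τ))/(1−C̄·exp(e^τ)), 1, (1−C̄(1−e^τ)exp(e^τ))/(1−C̄·exp(e^τ))) is, for any C̄ ∈ ℂ, a solution of the system ẋ₁ = x₃(x₁−x₂), ẋ₂ = 0, ẋ₃ = x₁(x₃−x₂) on any domain where 1−C̄·exp(e^τ) ≠ 0. Moreover I₁ = x₂·log((x₃−x₂)/(x₁−x₂)) + (x₃−x₁) and I₂ = x₂ are first integrals of this system. -/

import Mathlib

/-- the explicit general solution of `gDH(0,0,0;0,1,0;1)`
(system e.IV(∞,1,∞)), and its first integrals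
`I₁ = x₂·log((x₃−x₂)/(x₁−x₂)) + (x₃−x₁)` and `I₂ = x₂`. -/
theorem stmt_19 (Cb : ℂ) (x₁ x₂ x₃ : ℂ → ℂ)
    (hx₁ : ∀ s, x₁ s = (1 + Complex.exp s - Cb * Complex.exp (Complex.exp s))
        / (1 - Cb * Complex.exp (Complex.exp s)))
    (hx₂ : ∀ s, x₂ s = 1)
    (hx₃ : ∀ s, x₃ s = (1 - Cb * (1 - Complex.exp s) * Complex.exp (Complex.exp s))
        / (1 - Cb * Complex.exp (Complex.exp s)))
    (τ : ℂ) (hden : 1 - Cb * Complex.exp (Complex.exp τ) ≠ 0) :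
    (HasDerivAt x₁ (x₃ τ * (x₁ τ - x₂ τ)) τ ∧
     HasDerivAt x₂ 0 τ ∧
     HasDerivAt x₃ (x₁ τ * (x₃ τ - x₂ τ)) τ) ∧
    (∀ (y₁ y₂ y₃ L : ℂ → ℂ) (σ : ℂ),
      HasDerivAt y₁ (y₃ σ * (y₁ σ - y₂ σ)) σ →
      HasDerivAt y₂ 0 σ →
      HasDerivAt y₃ (y₁ σ * (y₃ σ - y₂ σ)) σ →
      y₁ σ ≠ y₂ σ →
      y₃ σ ≠ y₂ σ →
      HasDerivAt L ((y₃ σ - y₂ σ) / (y₁ σ - y₂ σ))⁻¹ ((y₃ σ - y₂ σ) / (y₁ σ - y₂ σ)) →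
      (HasDerivAt (fun s => y₂ s * L ((y₃ s - y₂ s) / (y₁ s - y₂ s)) + (y₃ s - y₁ s)) 0 σ ∧
       HasDerivAt y₂ 0 σ)) := by
  constructor
  · have hfx₁ : x₁ = fun s => (1 + Complex.exp s - Cb * Complex.exp (Complex.exp s))
        / (1 - Cb * Complex.exp (Complex.exp s)) := funext hx₁
    have hfx₂ : x₂ = fun _ => 1 := funext hx₂
    have hfx₃ : x₃ = fun s => (1 - Cb * (1 - Complex.exp s) * Complex.exp (Complex.exp s))
        / (1 - Cb * Complex.exp (Complex.exp s)) := funext hx₃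
    subst hfx₁ hfx₂ hfx₃
    have hE : HasDerivAt Complex.exp (Complex.exp τ) τ := Complex.hasDerivAt_exp τ
    have hF : HasDerivAt (fun s => Complex.exp (Complex.exp s))
        (Complex.exp (Complex.exp τ) * Complex.exp τ) τ := hE.cexp
    set E := Complex.exp τ with hEdef
    set F := Complex.exp (Complex.exp τ) with hFdef
    have hg : HasDerivAt (fun s => 1 - Cb * Complex.exp (Complex.exp s))
        (0 - Cb * (F * E)) τ :=
      (hasDerivAt_const τ (1:ℂ)).sub (hF.const_mul Cb)
    have hf1 : HasDerivAt (fun s => 1 + Complex.exp s - Cb * Complex.exp (Complex.exp s))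
        (0 + E - Cb * (F * E)) τ :=
      ((hasDerivAt_const τ (1:ℂ)).add hE).sub (hF.const_mul Cb)
    have hf3 : HasDerivAt (fun s => 1 - Cb * (1 - Complex.exp s) * Complex.exp (Complex.exp s))
        (0 - ((0 * (1 - E) + Cb * (0 - E)) * F + Cb * (1 - E) * (F * E))) τ :=
      (hasDerivAt_const τ (1:ℂ)).sub
        (((hasDerivAt_const τ Cb).mul ((hasDerivAt_const τ (1:ℂ)).sub hE)).mul hF)
    refine ⟨?_, ?_, ?_⟩
    · have h := hf1.div hg hden
      refine h.congr_deriv ?_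
      simp only [← hFdef]
      simp only [← hEdef]
      field_simp
      ring
    · exact hasDerivAt_const τ 1
    · have h := hf3.div hg hden
      refine h.congr_deriv ?_
      simp only [← hFdef]
      simp only [← hEdef]
      field_simp
      ring
  · rintro y₁ y₂ y₃ L σ hy₁ hy₂ hy₃ hne1 hne3 hL
    refine ⟨?_, hy₂⟩
    have h12 : y₁ σ - y₂ σ ≠ 0 := sub_ne_zero.mpr hne1
    have h32 : y₃ σ - y₂ σ ≠ 0 := sub_ne_zero.mpr hne3
    have hInner : HasDerivAt (fun s => (y₃ s - y₂ s) / (y₁ s - y₂ s))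
        (((y₁ σ * (y₃ σ - y₂ σ) - 0) * (y₁ σ - y₂ σ) -
          (y₃ σ - y₂ σ) * (y₃ σ * (y₁ σ - y₂ σ) - 0)) / (y₁ σ - y₂ σ) ^ 2) σ :=
      (hy₃.sub hy₂).div (hy₁.sub hy₂) h12
    have hcomp := hL.comp σ hInner
    have hprod := hy₂.mul hcomp
    have hsum := hprod.add (hy₃.sub hy₁)
    refine hsum.congr_deriv ?_
    field_simp
    ring
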